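/- (Lemma 10 of the Supplemental Material and the if-part of Theorem 3.) Let d ≥ 1 and N ≥ 1. For index arrays (i_{k,n}) ∈ Fin d, k ∈ Fin d, n ∈ Fin N, define the N-line controlled-order Kraus operator 𝒦_{(i_{k,n})} := Σ_{j∈Fin d} (⨂_{n∈Fin N} E^{(j)}_{i_{j,n}} · E^{(j⊕1)}_{i_{j⊕1,n}} · ⋯ · E^{(j⊕(d−1))}_{i_{j⊕(d−1),n}}) ⊗ |j⟩⟨j|, a matrix on (ℂ^d)^{⊗N} ⊗ ℂ^d, and set P_0^N := Σ_{j∈Fin d} (|j⟩⟨j|)^{⊗(N+1)}. Then: (a) for every matrix ρ on (ℂ^d)^{⊗(N+1)}, Σ_{(i_{k,n})} 𝒦 ρ 𝒦† = P_0^N ρ P_0^N + Σ_{j∈Fin d} Σ_{y∈(Fin d)^N, y≠(j,…,j)} ρ((y,j),(y,j)) · (|j⟩⟨j|)^{⊗(N+1)}; (b) consequently, for every matrix ρ on ℂ^D ⊗ (ℂ^d)^{⊗(N+1)} with (I_D ⊗ P_0^N) ρ (I_D ⊗ P_0^N) = ρ, one has Σ_{(i_{k,n})} (I_D ⊗ 𝒦)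 ρ (I_D ⊗ 𝒦)† = ρ; in particular, for D = d the (N+2)-partite GHZ state GHZ_{N+2} := (1/√d) Σ_{j∈Fin d} e_j^{⊗(N+2)} satisfies (I_d ⊗ 𝒦-channel)(GHZ_{N+2} GHZ_{N+2}†) = GHZ_{N+2} GHZ_{N+2}†. -/

import Mathlib

open Matrix Kronecker BigOperators Complex

noncomputable def Emat (d : ℕ) (j i : Fin d) : Matrix (Fin d) (Fin d) ℂ :=
  Matrix.single j i 1

noncomputable def P0 (d : ℕ) : Matrix (Fin d × Fin d) (Fin d × Fin d) ℂ :=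
  ∑ j : Fin d, Emat d j j ⊗ₖ Emat d j j

noncomputable def Sop (d : ℕ) [NeZero d] (idx : Fin d → Fin d) :
    Matrix (Fin d × Fin d) (Fin d × Fin d) ℂ :=
  ∑ j : Fin d,
    (((List.finRange d).map (fun k => Emat d (j + k) (idx (j + k)))).prod) ⊗ₖ Emat d j j
/-- The `N`-fold Kronecker product `⨂_n M_n` on `(ℂ^d)^{⊗N}`. -/
noncomputable def kronPow (d N : ℕ) (M : Fin N → Matrix (Fin d) (Fin d) ℂ) :
    Matrix (Fin N → Fin d) (Fin N → Fin d) ℂ :=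
  Matrix.of fun y y' => ∏ n : Fin N, M n (y n) (y' n)

/-- The `N`-line controlled-order Kraus operator `𝒦_{(i_{k,n})}`. -/
noncomputable def Kop (d N : ℕ) [NeZero d] (idx : Fin d → Fin N → Fin d) :
    Matrix ((Fin N → Fin d) × Fin d) ((Fin N → Fin d) × Fin d) ℂ :=
  ∑ j : Fin d,
    (kronPow d N (fun n =>
      (((List.finRange d).map (fun k => Emat d (j + k) (idx (j + k) n))).prod))) ⊗ₖ Emat d j j

/-- `P₀^N := Σ_j (|j⟩⟨j|)^{⊗(N+1)}`. -/
noncomputable def P0N (d N : ℕ) :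
    Matrix ((Fin N → Fin d) × Fin d) ((Fin N → Fin d) × Fin d) ℂ :=
  ∑ j : Fin d, kronPow d N (fun _ => Emat d j j) ⊗ₖ Emat d j j

/-- The `(N+2)`-partite GHZ state `(1/√d) Σ_j e_j^{⊗(N+2)}`. -/
noncomputable def GHZN (d N : ℕ) : Fin d × ((Fin N → Fin d) × Fin d) → ℂ :=
  fun p => if (∀ n : Fin N, p.2.1 n = p.1) ∧ p.2.2 = p.1
    then ((1 / Real.sqrt d : ℝ) : ℂ) else 0


lemma Emat_apply {d : ℕ} (j i a b : Fin d) :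
    Emat d j i a b = if j = a ∧ i = b then 1 else 0 := by
  simp [Emat, Matrix.single]

open scoped Classical in
lemma prod_range_Emat {d : ℕ} (g h : ℕ → Fin d) :
    ∀ n : ℕ, 1 ≤ n →
      ((List.range n).map fun k => Emat d (g k) (h k)).prod =
        if ∀ k : ℕ, k + 1 < n → h k = g (k + 1) then Emat d (g 0) (h (n - 1)) else 0 := by
  intro n
  induction n with
  | zero => omega
  | succ n ih =>
    intro _
    rcases Nat.lt_or_ge 1 (n+1) with h1 | h1
    case inr =>
      have hn : n = 0 := by omega
      subst hn
      simp [List.range_succ]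
    case inl =>
      have hn : 1 ≤ n := by omega
      rw [List.range_succ, List.map_append, List.prod_append, ih hn]
      have hiff : (∀ k : ℕ, k + 1 < n + 1 → h k = g (k + 1)) ↔
          (∀ k : ℕ, k + 1 < n → h k = g (k + 1)) ∧ h (n - 1) = g n := by
        constructor
        · intro hc
          refine ⟨fun k hk => hc k (by omega), ?_⟩
          have := hc (n - 1) (by omega)
          rwa [Nat.sub_add_cancel hn] at this
        · rintro ⟨hc, he⟩ k hk
          rcases Nat.lt_or_ge (k + 1) n with h2 | h2
          · exact hc k h2
          · have : k = n - 1 := by omega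
            subst this
            rwa [Nat.sub_add_cancel hn]
      by_cases hc : ∀ k : ℕ, k + 1 < n → h k = g (k + 1)
      · by_cases he : h (n - 1) = g n
        · rw [if_pos hc, if_pos (hiff.mpr ⟨hc, he⟩)]
          simp only [List.map_cons, List.map_nil, List.prod_cons, List.prod_nil, mul_one]
          rw [Emat, Emat, Emat, he, Matrix.single_mul_single_same, one_mul]
          simp
        · rw [if_pos hc, if_neg (fun hx => he (hiff.mp hx).2)]
          simp only [List.map_cons, List.map_nil, List.prod_cons, List.prod_nil, mul_one]
          exact Matrix.single_mul_single_of_ne _ _ _ _ he 1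
      · rw [if_neg hc, if_neg (fun hx => hc (hiff.mp hx).1), zero_mul]

variable {d N : ℕ} [NeZero d]

lemma mu_eq_neg_one : (⟨(d-1) % d, Nat.mod_lt _ (NeZero.pos d)⟩ : Fin d) = -1 := by
  apply eq_neg_of_add_eq_zero_left
  apply Fin.ext
  rw [Fin.add_def, Fin.val_one', Fin.val_zero]
  show ((d-1) % d + 1 % d) % d = 0
  rcases Nat.lt_or_ge 1 d with hd | hd
  · rw [Nat.mod_eq_of_lt (by omega : d - 1 < d), Nat.mod_eq_of_lt hd]
    rw [Nat.sub_add_cancel (by omega)]; exact Nat.mod_self d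
  · have hd1 : d = 1 := by have := NeZero.pos d; omega
    subst hd1; rfl

lemma mk_succ_eq (k : ℕ) (hk : k + 1 < d) :
    (⟨(k+1) % d, Nat.mod_lt _ (NeZero.pos d)⟩ : Fin d) =
      ⟨k % d, Nat.mod_lt _ (NeZero.pos d)⟩ + 1 := by
  apply Fin.ext
  rw [Fin.add_def, Fin.val_one']
  show (k+1) % d = (k % d + 1 % d) % d
  rw [Nat.mod_eq_of_lt (by omega : k < d), Nat.mod_eq_of_lt (by omega : 1 < d),
    Nat.mod_eq_of_lt hk]

lemma map_finRange {α : Type*} (F : Fin d → α) :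
    (List.finRange d).map F
      = (List.range d).map (fun k => F ⟨k % d, Nat.mod_lt _ (NeZero.pos d)⟩) := by
  apply List.ext_getElem
  · simp
  · intro i h1 h2
    simp only [List.getElem_map, List.getElem_finRange, List.getElem_range]
    congr 1
    apply Fin.ext
    simp only [Fin.coe_cast]
    simp [Nat.mod_eq_of_lt (by simpa using h1)]

open scoped Classical in
lemma prodE (j : Fin d) (f : Fin d → Fin d) :
    ((List.finRange d).map fun k => Emat d (j + k) (f (j + k))).prod =
      if ∀ m, m ≠ j - 1 → f m = m + 1 then Emat d j (f (j - 1)) else 0 := by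
  rw [map_finRange]
  refine Eq.trans (prod_range_Emat (fun k => j + ⟨k % d, Nat.mod_lt _ (NeZero.pos d)⟩)
      (fun k => f (j + ⟨k % d, Nat.mod_lt _ (NeZero.pos d)⟩)) d (NeZero.pos d)) ?_
  have h0 : (⟨0 % d, Nat.mod_lt _ (NeZero.pos d)⟩ : Fin d) = 0 := Fin.ext (by simp)
  have hlast : j + (⟨(d-1) % d, Nat.mod_lt _ (NeZero.pos d)⟩ : Fin d) = j - 1 := by
    rw [mu_eq_neg_one]; abel
  have hcond : (∀ k : ℕ, k + 1 < d →
        f (j + ⟨k % d, Nat.mod_lt _ (NeZero.pos d)⟩) = j + ⟨(k+1) % d, Nat.mod_lt _ (NeZero.pos d)⟩)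
      ↔ (∀ m, m ≠ j - 1 → f m = m + 1) := by
    constructor
    · intro hc m hm1
      have hne : m - j ≠ -1 := by
        intro h
        apply hm1
        rw [sub_eq_iff_eq_add] at h
        rw [h]; abel
      have hklt : (m - j).val < d := (m - j).isLt
      have hkne : (m - j).val ≠ d - 1 := by
        intro h
        apply hne
        rw [← mu_eq_neg_one]
        apply Fin.ext
        show (m - j).val = (d-1) % d
        rw [h, Nat.mod_eq_of_lt (by omega)]
      have hmk : (⟨(m - j).val % d, Nat.mod_lt _ (NeZero.pos d)⟩ : Fin d) = m - j :=
        Fin.ext (Nat.mod_eq_of_lt hklt)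
      have hc2 := hc (m - j).val (by omega)
      rw [hmk] at hc2
      have h2 : j + (m - j) = m := by abel
      rw [h2] at hc2
      rw [hc2, mk_succ_eq (m - j).val (by omega), hmk]
      abel
    · intro hc k hk
      have hne : j + (⟨k % d, Nat.mod_lt _ (NeZero.pos d)⟩ : Fin d) ≠ j - 1 := by
        intro h
        have h' : j + (⟨k % d, Nat.mod_lt _ (NeZero.pos d)⟩ : Fin d) = j + (-1) := by
          rw [h]; abel
        have h'' := add_left_cancel h'
        rw [← mu_eq_neg_one] at h''
        have h3 : k % d = (d-1) % d := congrArg Fin.val h''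
        rw [Nat.mod_eq_of_lt (by omega : k < d), Nat.mod_eq_of_lt (by omega : d - 1 < d)] at h3
        omega
      rw [hc _ hne, mk_succ_eq k hk]
      abel
  rw [if_congr hcond (by rw [h0, add_zero, hlast]) rfl]

def GdP (d N : ℕ) [NeZero d] (a : Fin d) (idx : Fin d → Fin N → Fin d) : Prop :=
  ∀ m : Fin d, m ≠ a - 1 → ∀ n : Fin N, idx m n = m + 1

open scoped Classical in
lemma Kop_apply {d N : ℕ} [NeZero d] (idx : Fin d → Fin N → Fin d)
    (y z : Fin N → Fin d) (a c : Fin d) :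
    Kop d N idx (y, a) (z, c) =
      if (z, c) = ((fun n => idx (a - 1) n), a) ∧ (y = fun _ => a) ∧ GdP d N a idx
      then 1 else 0 := by
  classical
  rw [Kop, Matrix.sum_apply]
  have hterm : ∀ j : Fin d,
      ((kronPow d N (fun n =>
        (((List.finRange d).map (fun k => Emat d (j + k) (idx (j + k) n))).prod))) ⊗ₖ
        Emat d j j) ((y, a)) ((z, c)) =
      if (∀ n, (∀ m, m ≠ j - 1 → idx m n = m + 1) ∧ j = y n ∧ idx (j-1) n = z n)
          ∧ j = a ∧ j = c then 1 else 0 := by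
    intro j
    rw [kroneckerMap_apply, kronPow, Matrix.of_apply, Emat_apply]
    have hfac : ∀ n : Fin N,
        (((List.finRange d).map (fun k => Emat d (j + k) (idx (j + k) n))).prod) (y n) (z n)
          = if (∀ m, m ≠ j - 1 → idx m n = m + 1) ∧ j = y n ∧ idx (j-1) n = z n
            then 1 else 0 := by
      intro n
      rw [prodE j (fun m => idx m n)]
      by_cases hC : ∀ m, m ≠ j - 1 → idx m n = m + 1
      · rw [if_pos hC, Emat_apply]
        exact (if_congr (and_iff_right hC) rfl rfl).symm
      · rw [if_neg hC]
        simp [hC]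
    simp only [hfac]
    simp only [Finset.prod_boole, ite_zero_mul_ite_zero, one_mul]
    apply if_congr ?_ rfl rfl
    constructor
    · rintro ⟨h1, h2⟩
      exact ⟨fun n => h1 n (Finset.mem_univ n), h2⟩
    · rintro ⟨h1, h2⟩
      exact ⟨fun n _ => h1 n, h2⟩
  simp only [hterm]
  rw [Finset.sum_eq_single a]
  · apply if_congr ?_ rfl rfl
    constructor
    · rintro ⟨h1, -, h5⟩
      refine ⟨?_, funext fun n => ((h1 n).2.1).symm, fun m hm n => ((h1 n).1) m hm⟩
      simp only [Prod.mk.injEq]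
      exact ⟨funext fun n => ((h1 n).2.2).symm, h5.symm⟩
    · rintro ⟨hzc, hy, hG⟩
      simp only [Prod.mk.injEq] at hzc
      exact ⟨fun n => ⟨fun m hm => hG m hm n, (congrFun hy n).symm, (congrFun hzc.1 n).symm⟩,
        rfl, hzc.2.symm⟩
  · intro b _ hb
    rw [if_neg]
    rintro ⟨-, h4, -⟩
    exact hb h4
  · intro h; exact absurd (Finset.mem_univ a) h

open scoped Classical in
lemma kron_jj_entry {d N : ℕ} [NeZero d] (j : Fin d) (y z : Fin N → Fin d) (a c : Fin d) :
    (kronPow d N (fun _ => Emat d j j) ⊗ₖ Emat d j j) ((y, a)) ((z, c)) =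
      if (∀ n, j = y n ∧ j = z n) ∧ j = a ∧ j = c then 1 else 0 := by
  classical
  rw [kroneckerMap_apply, kronPow, Matrix.of_apply, Emat_apply]
  simp only [Emat_apply]
  simp only [Finset.prod_boole, ite_zero_mul_ite_zero, one_mul]
  apply if_congr ?_ rfl rfl
  constructor
  · rintro ⟨h1, h2⟩
    exact ⟨fun n => h1 n (Finset.mem_univ n), h2⟩
  · rintro ⟨h1, h2⟩
    exact ⟨fun n _ => h1 n, h2⟩

open scoped Classical in
lemma P0N_apply {d N : ℕ} [NeZero d] (y z : Fin N → Fin d) (a c : Fin d) :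
    P0N d N (y, a) (z, c) =
      if (y = fun _ => a) ∧ (z = fun _ => a) ∧ c = a then 1 else 0 := by
  classical
  rw [P0N, Matrix.sum_apply]
  have hterm : ∀ j : Fin d,
      (kronPow d N (fun _ => Emat d j j) ⊗ₖ Emat d j j) ((y, a)) ((z, c)) =
      if (∀ n, j = y n ∧ j = z n) ∧ j = a ∧ j = c then 1 else 0 := by
    intro j
    rw [kroneckerMap_apply, kronPow, Matrix.of_apply, Emat_apply]
    simp only [Emat_apply]
    simp only [Finset.prod_boole, ite_zero_mul_ite_zero, one_mul]
    apply if_congr ?_ rfl rfl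
    constructor
    · rintro ⟨h1, h2⟩
      exact ⟨fun n => h1 n (Finset.mem_univ n), h2⟩
    · rintro ⟨h1, h2⟩
      exact ⟨fun n _ => h1 n, h2⟩
  simp only [hterm]
  rw [Finset.sum_eq_single a]
  · apply if_congr ?_ rfl rfl
    constructor
    · rintro ⟨h1, -, h5⟩
      exact ⟨funext fun n => ((h1 n).1).symm, funext fun n => ((h1 n).2).symm, h5.symm⟩
    · rintro ⟨hy, hz, hc⟩
      exact ⟨fun n => ⟨(congrFun hy n).symm, (congrFun hz n).symm⟩, rfl, hc.symm⟩
  · intro b _ hb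
    rw [if_neg]
    rintro ⟨-, h4, -⟩
    exact hb h4
  · intro h; exact absurd (Finset.mem_univ a) h

open scoped Classical in
lemma Kop_collapse_left (idx : Fin d → Fin N → Fin d) (y : Fin N → Fin d) (a : Fin d)
    (X : ((Fin N → Fin d) × Fin d) → ℂ) :
    ∑ r : (Fin N → Fin d) × Fin d, Kop d N idx (y, a) r * X r =
      if (y = fun _ => a) ∧ GdP d N a idx then X ((fun n => idx (a - 1) n), a) else 0 := by
  classical
  by_cases hC : (y = fun _ => a) ∧ GdP d N a idx
  · have hK : ∀ r : (Fin N → Fin d) × Fin d, Kop d N idx (y, a) r =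
        if r = ((fun n => idx (a - 1) n), a) then 1 else 0 := by
      rintro ⟨z, c⟩
      rw [Kop_apply]
      simp [hC]
    rw [if_pos hC]
    simp only [hK, ite_mul, one_mul, zero_mul]
    simp [Finset.sum_ite_eq']
  · have hK : ∀ r : (Fin N → Fin d) × Fin d, Kop d N idx (y, a) r = 0 := by
      rintro ⟨z, c⟩
      rw [Kop_apply, if_neg]
      tauto
    simp [hK, hC]

open scoped Classical in
lemma Kop_collapse_right (idx : Fin d → Fin N → Fin d) (y : Fin N → Fin d) (b : Fin d)
    (X : ((Fin N → Fin d) × Fin d) → ℂ) :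
    ∑ s : (Fin N → Fin d) × Fin d, X s * star (Kop d N idx (y, b) s) =
      if (y = fun _ => b) ∧ GdP d N b idx then X ((fun n => idx (b - 1) n), b) else 0 := by
  classical
  by_cases hC : (y = fun _ => b) ∧ GdP d N b idx
  · have hK : ∀ s : (Fin N → Fin d) × Fin d, star (Kop d N idx (y, b) s) =
        if s = ((fun n => idx (b - 1) n), b) then 1 else 0 := by
      rintro ⟨z, c⟩
      rw [Kop_apply]
      simp [hC, apply_ite star]
    rw [if_pos hC]
    simp only [hK, mul_ite, mul_one, mul_zero]
    simp [Finset.sum_ite_eq']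
  · have hK : ∀ s : (Fin N → Fin d) × Fin d, star (Kop d N idx (y, b) s) = 0 := by
      rintro ⟨z, c⟩
      rw [Kop_apply, if_neg]
      · simp
      · tauto
    simp [hK, hC]

open scoped Classical in
lemma KrhoK_entry (idx : Fin d → Fin N → Fin d)
    (ρ : Matrix ((Fin N → Fin d) × Fin d) ((Fin N → Fin d) × Fin d) ℂ)
    (y y' : Fin N → Fin d) (a b : Fin d) :
    (Kop d N idx * ρ * (Kop d N idx)ᴴ) (y, a) (y', b) =
      if (y = fun _ => a) ∧ (y' = fun _ => b) ∧ GdP d N a idx ∧ GdP d N b idx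
      then ρ ((fun n => idx (a - 1) n), a) ((fun n => idx (b - 1) n), b) else 0 := by
  classical
  rw [mul_assoc, Matrix.mul_apply]
  rw [Kop_collapse_left idx y a (fun r => (ρ * (Kop d N idx)ᴴ) r (y', b))]
  have hR : (ρ * (Kop d N idx)ᴴ) ((fun n => idx (a - 1) n), a) (y', b) =
      if (y' = fun _ => b) ∧ GdP d N b idx
      then ρ ((fun n => idx (a - 1) n), a) ((fun n => idx (b - 1) n), b) else 0 := by
    rw [Matrix.mul_apply]
    simp only [Matrix.conjTranspose_apply]
    exact Kop_collapse_right idx y' b (fun s => ρ ((fun n => idx (a - 1) n), a) s)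
  by_cases h1 : (y = fun _ => a) ∧ GdP d N a idx
  · rw [if_pos h1, hR]
    by_cases h2 : (y' = fun _ => b) ∧ GdP d N b idx
    · rw [if_pos h2, if_pos ⟨h1.1, h2.1, h1.2, h2.2⟩]
    · rw [if_neg h2, if_neg (by tauto)]
  · rw [if_neg h1, if_neg (by tauto)]

open scoped Classical in
lemma sum_idx_eq (a : Fin d) (F : (Fin N → Fin d) → ℂ) :
    ∑ idx : Fin d → Fin N → Fin d,
        (if GdP d N a idx then F (fun n => idx (a - 1) n) else 0) =
      ∑ g : Fin N → Fin d, F g := by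
  classical
  rw [← Finset.sum_filter]
  apply Finset.sum_nbij' (fun idx => fun n => idx (a - 1) n)
      (fun g => fun m n => if m = a - 1 then g n else m + 1)
  · intro idx _; exact Finset.mem_univ _
  · intro g _
    simp only [Finset.mem_filter, Finset.mem_univ, true_and]
    intro m hm n
    simp [hm]
  · intro idx hidx
    simp only [Finset.mem_filter, Finset.mem_univ, true_and] at hidx
    funext m n
    by_cases hm : m = a - 1
    · simp [hm]
    · simp [hm, hidx m hm n]
  · intro g _
    funext n
    simp
  · intro idx _; rfl

open scoped Classical in
lemma sum_idx_ne (a b : Fin d) (hab : a ≠ b)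
    (F : (Fin N → Fin d) → (Fin N → Fin d) → ℂ) :
    ∑ idx : Fin d → Fin N → Fin d,
        (if GdP d N a idx ∧ GdP d N b idx
          then F (fun n => idx (a - 1) n) (fun n => idx (b - 1) n) else 0) =
      F (fun _ => a) (fun _ => b) := by
  classical
  rw [Finset.sum_eq_single (fun m _ => m + 1)]
  · rw [if_pos ⟨fun m _ n => rfl, fun m _ n => rfl⟩]
    have h1 : (fun n : Fin N => a - 1 + 1) = fun _ : Fin N => a := by
      funext n; exact sub_add_cancel a 1
    have h2 : (fun n : Fin N => b - 1 + 1) = fun _ : Fin N => b := by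
      funext n; exact sub_add_cancel b 1
    rw [h1, h2]
  · intro idx _ hne
    rw [if_neg]
    rintro ⟨hGa, hGb⟩
    apply hne
    funext m n
    by_cases hm : m = a - 1
    · have hmb : m ≠ b - 1 := by
        rw [hm]; intro h
        exact hab (by rwa [sub_left_inj] at h)
      exact hGb m hmb n
    · exact hGa m hm n
  · intro h; exact absurd (Finset.mem_univ _) h

open scoped Classical in
lemma channel_entry (ρ : Matrix ((Fin N → Fin d) × Fin d) ((Fin N → Fin d) × Fin d) ℂ)
    (y y' : Fin N → Fin d) (a b : Fin d) :
    (∑ idx : Fin d → Fin N → Fin d, Kop d N idx * ρ * (Kop d N idx)ᴴ) (y, a) (y', b) =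
      if (y = fun _ => a) ∧ (y' = fun _ => b) then
        (if a = b then ∑ z : Fin N → Fin d, ρ (z, a) (z, a)
          else ρ ((fun _ => a), a) ((fun _ => b), b))
      else 0 := by
  classical
  rw [Matrix.sum_apply]
  simp only [KrhoK_entry]
  by_cases h1 : y = fun _ => a
  case neg => simp [h1]
  by_cases h2 : y' = fun _ => b
  case neg => simp [h1, h2]
  rw [if_pos ⟨h1, h2⟩]
  simp only [h1, h2, true_and]
  by_cases hab : a = b
  · subst hab
    rw [if_pos rfl]
    calc ∑ idx : Fin d → Fin N → Fin d,
          (if GdP d N a idx ∧ GdP d N a idx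
            then ρ ((fun n => idx (a - 1) n), a) ((fun n => idx (a - 1) n), a) else 0)
        = ∑ idx : Fin d → Fin N → Fin d,
          (if GdP d N a idx
            then ρ ((fun n => idx (a - 1) n), a) ((fun n => idx (a - 1) n), a) else 0) := by
          simp only [and_self]
      _ = ∑ z : Fin N → Fin d, ρ (z, a) (z, a) := sum_idx_eq a (fun g => ρ (g, a) (g, a))
  · rw [if_neg hab]
    exact sum_idx_ne a b hab (fun g g' => ρ (g, a) (g', b))

open scoped Classical in
lemma P_sandwich (ρ : Matrix ((Fin N → Fin d) × Fin d) ((Fin N → Fin d) × Fin d) ℂ)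
    (y y' : Fin N → Fin d) (a b : Fin d) :
    (P0N d N * ρ * P0N d N) (y, a) (y', b) =
      if (y = fun _ => a) ∧ (y' = fun _ => b)
      then ρ ((fun _ => a), a) ((fun _ => b), b) else 0 := by
  classical
  have hPl : ∀ r : (Fin N → Fin d) × Fin d, P0N d N (y, a) r =
      if r = ((fun _ => a), a) ∧ (y = fun _ => a) then 1 else 0 := by
    rintro ⟨z, c⟩
    rw [P0N_apply]
    apply if_congr ?_ rfl rfl
    constructor
    · rintro ⟨h1, h2, h3⟩
      exact ⟨by simp only [Prod.mk.injEq]; exact ⟨h2, h3⟩, h1⟩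
    · rintro ⟨h1, h2⟩
      simp only [Prod.mk.injEq] at h1
      exact ⟨h2, h1.1, h1.2⟩
  have hPr : ∀ s : (Fin N → Fin d) × Fin d, P0N d N s (y', b) =
      if s = ((fun _ => b), b) ∧ (y' = fun _ => b) then 1 else 0 := by
    rintro ⟨z, c⟩
    rw [P0N_apply]
    apply if_congr ?_ rfl rfl
    constructor
    · rintro ⟨h1, h2, h3⟩
      subst h3
      refine ⟨?_, h2⟩
      simp [h1]
    · rintro ⟨h1, h2⟩
      simp only [Prod.mk.injEq] at h1
      obtain ⟨h3, h4⟩ := h1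
      subst h4
      exact ⟨h3, h2, rfl⟩
  by_cases h1 : y = fun _ => a
  · by_cases h2 : y' = fun _ => b
    · rw [if_pos ⟨h1, h2⟩, mul_assoc, Matrix.mul_apply]
      have : ∀ r, P0N d N (y, a) r = if r = ((fun _ => a), a) then 1 else 0 := by
        intro r; rw [hPl r]; simp [h1]
      simp only [this, ite_mul, one_mul, zero_mul, Finset.sum_ite_eq', Finset.mem_univ, if_true]
      rw [Matrix.mul_apply]
      have : ∀ s, P0N d N s ((y', b)) = if s = ((fun _ => b), b) then 1 else 0 := by
        intro s; rw [hPr s]; simp [h2]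
      simp only [this, mul_ite, mul_one, mul_zero, Finset.sum_ite_eq', Finset.mem_univ, if_true]
    · rw [if_neg (by tauto), mul_assoc, Matrix.mul_apply]
      have hz : ∀ s, P0N d N s ((y', b)) = 0 := by
        intro s; rw [hPr s, if_neg]; tauto
      have h0 : ∀ r, (ρ * P0N d N) r ((y', b)) = 0 := by
        intro r
        rw [Matrix.mul_apply]
        simp [hz]
      simp [h0]
  · rw [if_neg (by tauto), Matrix.mul_apply]
    have hz : ∀ r, P0N d N ((y, a)) r = 0 := by
      intro r; rw [hPl r, if_neg]; tauto
    have : ∀ r, (P0N d N * ρ) ((y, a)) r = 0 := by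
      intro r
      rw [Matrix.mul_apply]
      simp [hz]
    simp [this]

lemma junk_entry (ρ : Matrix ((Fin N → Fin d) × Fin d) ((Fin N → Fin d) × Fin d) ℂ)
    (y y' : Fin N → Fin d) (a b : Fin d) :
    (∑ j : Fin d, ∑ z ∈ Finset.univ.filter (fun z : Fin N → Fin d => z ≠ fun _ => j),
        ρ (z, j) (z, j) • (kronPow d N (fun _ => Emat d j j) ⊗ₖ Emat d j j)) (y, a) (y', b) =
      if (y = fun _ => a) ∧ (y' = fun _ => a) ∧ a = b
      then ∑ z ∈ Finset.univ.filter (fun z : Fin N → Fin d => z ≠ fun _ => a),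
        ρ (z, a) (z, a) else 0 := by
  classical
  rw [Matrix.sum_apply]
  have hterm : ∀ j : Fin d,
      (∑ z ∈ Finset.univ.filter (fun z : Fin N → Fin d => z ≠ fun _ => j),
        ρ (z, j) (z, j) • (kronPow d N (fun _ => Emat d j j) ⊗ₖ Emat d j j)) (y, a) (y', b) =
      if (y = fun _ => j) ∧ (y' = fun _ => j) ∧ j = a ∧ j = b
      then ∑ z ∈ Finset.univ.filter (fun z : Fin N → Fin d => z ≠ fun _ => j),
        ρ (z, j) (z, j) else 0 := by
    intro j
    rw [Matrix.sum_apply]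
    have : ∀ z, (ρ (z, j) (z, j) • (kronPow d N (fun _ => Emat d j j) ⊗ₖ Emat d j j)) (y, a) (y', b)
        = ρ (z, j) (z, j) * (if (y = fun _ => j) ∧ (y' = fun _ => j) ∧ j = a ∧ j = b then 1 else 0) := by
      intro z
      rw [Matrix.smul_apply, kron_jj_entry, smul_eq_mul]
      congr 1
      apply if_congr ?_ rfl rfl
      constructor
      · rintro ⟨h1, h2, h3⟩
        exact ⟨funext fun n => ((h1 n).1).symm, funext fun n => ((h1 n).2).symm, h2, h3⟩
      · rintro ⟨h1, h2, h3, h4⟩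
        exact ⟨fun n => ⟨(congrFun h1 n).symm, (congrFun h2 n).symm⟩, h3, h4⟩
    simp only [this, mul_ite, mul_one, mul_zero]
    by_cases hc : (y = fun _ => j) ∧ (y' = fun _ => j) ∧ j = a ∧ j = b
    · simp [hc]
    · simp [hc]
  simp only [hterm]
  rw [Finset.sum_eq_single a]
  · apply if_congr ?_ rfl rfl
    constructor
    · rintro ⟨h1, h2, -, h4⟩
      exact ⟨h1, h2, h4⟩
    · rintro ⟨h1, h2, h3⟩
      exact ⟨h1, h2, rfl, h3⟩
  · intro j _ hj
    rw [if_neg]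
    rintro ⟨-, -, h3, -⟩
    exact hj h3
  · intro h; exact absurd (Finset.mem_univ _) h

open scoped Classical in
lemma one_kron_sandwich {m : Type*} [Fintype m] [DecidableEq m] {D : ℕ}
    (A B : Matrix m m ℂ) (ρ : Matrix (Fin D × m) (Fin D × m) ℂ) (α β : Fin D) (p q : m) :
    (((1 : Matrix (Fin D) (Fin D) ℂ) ⊗ₖ A) * ρ * ((1 : Matrix (Fin D) (Fin D) ℂ) ⊗ₖ B))
        (α, p) (β, q) =
      (A * Matrix.of (fun r s => ρ (α, r) (β, s)) * B) p q := by
  simp only [Matrix.mul_apply, Fintype.sum_prod_type, kroneckerMap_apply, Matrix.one_apply,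
    Matrix.of_apply, ite_mul, mul_ite, zero_mul, mul_zero, one_mul, mul_one]
  simp [Finset.sum_ite_eq, Finset.sum_ite_eq', Finset.mul_sum, Finset.sum_mul]

lemma one_kron_ct {m : Type*} [Fintype m] [DecidableEq m] {D : ℕ} (K : Matrix m m ℂ) :
    (((1 : Matrix (Fin D) (Fin D) ℂ)) ⊗ₖ K)ᴴ = (1 : Matrix (Fin D) (Fin D) ℂ) ⊗ₖ Kᴴ := by
  ext ⟨α, p⟩ ⟨β, q⟩
  simp only [Matrix.conjTranspose_apply, kroneckerMap_apply, Matrix.one_apply]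
  by_cases h : β = α
  · subst h; simp
  · rw [if_neg h, if_neg (fun h' : α = β => h h'.symm)]
    simp


lemma invariance_lemma {d N D : ℕ} [NeZero d]
    (ρ : Matrix (Fin D × ((Fin N → Fin d) × Fin d)) (Fin D × ((Fin N → Fin d) × Fin d)) ℂ)
    (hsupp : ((1 : Matrix (Fin D) (Fin D) ℂ) ⊗ₖ P0N d N) * ρ *
        ((1 : Matrix (Fin D) (Fin D) ℂ) ⊗ₖ P0N d N) = ρ) :
    ∑ idx : Fin d → Fin N → Fin d,
        ((1 : Matrix (Fin D) (Fin D) ℂ) ⊗ₖ Kop d N idx) * ρ *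
          ((1 : Matrix (Fin D) (Fin D) ℂ) ⊗ₖ Kop d N idx)ᴴ = ρ := by
  classical
  have hsuppE : ∀ (α β : Fin D) (y y' : Fin N → Fin d) (a b : Fin d),
      ρ (α, (y, a)) (β, (y', b)) =
        if (y = fun _ => a) ∧ (y' = fun _ => b)
        then ρ (α, ((fun _ => a), a)) (β, ((fun _ => b), b)) else 0 := by
    intro α β y y' a b
    conv_lhs => rw [← hsupp]
    rw [one_kron_sandwich, P_sandwich]
    by_cases h1 : (y = fun _ => a) ∧ (y' = fun _ => b)
    · rw [if_pos h1, if_pos h1, Matrix.of_apply]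
    · rw [if_neg h1, if_neg h1]
  ext ⟨α, y, a⟩ ⟨β, y', b⟩
  rw [Matrix.sum_apply]
  have hstep : ∀ idx : Fin d → Fin N → Fin d,
      (((1 : Matrix (Fin D) (Fin D) ℂ) ⊗ₖ Kop d N idx) * ρ *
        ((1 : Matrix (Fin D) (Fin D) ℂ) ⊗ₖ Kop d N idx)ᴴ) (α, (y, a)) (β, (y', b)) =
      (Kop d N idx * Matrix.of (fun r s => ρ (α, r) (β, s)) * (Kop d N idx)ᴴ) (y, a) (y', b) := by
    intro idx
    rw [one_kron_ct, one_kron_sandwich]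
  simp only [hstep]
  rw [← Matrix.sum_apply]
  rw [channel_entry]
  rw [hsuppE α β y y' a b]
  by_cases h1 : (y = fun _ => a) ∧ (y' = fun _ => b)
  · rw [if_pos h1, if_pos h1]
    by_cases hab : a = b
    · subst hab
      rw [if_pos rfl]
      have hz : ∀ z : Fin N → Fin d,
          (Matrix.of (fun r s => ρ (α, r) (β, s))) (z, a) (z, a) =
            if z = (fun _ => a) then ρ (α, ((fun _ => a), a)) (β, ((fun _ => a), a)) else 0 := by
        intro z
        rw [Matrix.of_apply, hsuppE]
        by_cases hza : z = fun _ => a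
        · rw [if_pos ⟨hza, hza⟩, if_pos hza]
        · rw [if_neg (fun h => hza h.1), if_neg hza]
      simp only [hz]
      simp [Finset.sum_ite_eq']
    · rw [if_neg hab, Matrix.of_apply]
  · rw [if_neg h1, if_neg h1]

/-- Lemma 10 and the if-part of Theorem 3: (a) explicit form of the `N`-line
controlled-order channel; (b) every state supported on `I_D ⊗ P₀^N` is left invariant; in
particular (for `D = d`) the `(N+2)`-partite GHZ state is preserved. -/
theorem stmt_19 (d N D : ℕ) [NeZero d] (hN : 1 ≤ N) :
    (∀ ρ : Matrix ((Fin N → Fin d) × Fin d) ((Fin N → Fin d) × Fin d) ℂ,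
      ∑ idx : Fin d → Fin N → Fin d, Kop d N idx * ρ * (Kop d N idx)ᴴ =
        P0N d N * ρ * P0N d N +
          ∑ j : Fin d,
            ∑ y ∈ Finset.univ.filter (fun y : Fin N → Fin d => y ≠ fun _ => j),
              ρ (y, j) (y, j) • (kronPow d N (fun _ => Emat d j j) ⊗ₖ Emat d j j)) ∧
    (∀ ρ : Matrix (Fin D × ((Fin N → Fin d) × Fin d)) (Fin D × ((Fin N → Fin d) × Fin d)) ℂ,
      ((1 : Matrix (Fin D) (Fin D) ℂ) ⊗ₖ P0N d N) * ρ *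
          ((1 : Matrix (Fin D) (Fin D) ℂ) ⊗ₖ P0N d N) = ρ →
        ∑ idx : Fin d → Fin N → Fin d,
          ((1 : Matrix (Fin D) (Fin D) ℂ) ⊗ₖ Kop d N idx) * ρ *
            ((1 : Matrix (Fin D) (Fin D) ℂ) ⊗ₖ Kop d N idx)ᴴ = ρ) ∧
    (∑ idx : Fin d → Fin N → Fin d,
        ((1 : Matrix (Fin d) (Fin d) ℂ) ⊗ₖ Kop d N idx) *
            vecMulVec (GHZN d N) (star (GHZN d N)) *
          ((1 : Matrix (Fin d) (Fin d) ℂ) ⊗ₖ Kop d N idx)ᴴ =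
      vecMulVec (GHZN d N) (star (GHZN d N))) := by
  classical
  refine ⟨?_, fun ρ h => invariance_lemma ρ h, ?_⟩
  · intro ρ
    ext ⟨y, a⟩ ⟨y', b⟩
    rw [channel_entry, Matrix.add_apply, P_sandwich, junk_entry]
    by_cases h1 : y = fun _ => a
    · by_cases h2 : y' = fun _ => b
      · subst h1
        subst h2
        by_cases hab : a = b
        · subst hab
          rw [if_pos (⟨rfl, rfl⟩ : _ ∧ _), if_pos (rfl : a = a),
            if_pos (⟨rfl, rfl⟩ : _ ∧ _), if_pos (⟨rfl, rfl, rfl⟩ : _ ∧ _ ∧ _),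
            Finset.filter_ne']
          exact (Finset.add_sum_erase Finset.univ (fun z => ρ (z, a) (z, a))
            (Finset.mem_univ (fun _ => a))).symm
        · rw [if_pos (⟨rfl, rfl⟩ : _ ∧ _), if_neg hab, if_pos (⟨rfl, rfl⟩ : _ ∧ _),
            if_neg (by rintro ⟨-, -, hx⟩; exact hab hx), add_zero]
      · rw [if_neg (by rintro ⟨-, hx⟩; exact h2 hx),
          if_neg (by rintro ⟨-, hx⟩; exact h2 hx),
          if_neg (by rintro ⟨-, hx, rfl⟩; exact h2 hx), add_zero]
    · rw [if_neg (by rintro ⟨hx, -⟩; exact h1 hx),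
        if_neg (by rintro ⟨hx, -⟩; exact h1 hx),
        if_neg (by rintro ⟨hx, -, -⟩; exact h1 hx), add_zero]
  · apply invariance_lemma
    have hG : ∀ (α : Fin d) (y : Fin N → Fin d) (a : Fin d),
        GHZN d N (α, (y, a)) ≠ 0 → (y = fun _ => a) := by
      intro α y a h
      by_cases hc : (∀ n : Fin N, y n = α) ∧ a = α
      · obtain ⟨hy, ha⟩ := hc
        subst ha
        exact funext fun n => hy n
      · exfalso
        apply h
        simp only [GHZN]
        rw [if_neg hc]
    ext ⟨α, y, a⟩ ⟨β, y', b⟩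
    rw [one_kron_sandwich, P_sandwich]
    by_cases h1 : (y = fun _ => a) ∧ (y' = fun _ => b)
    · obtain ⟨hy, hy'⟩ := h1
      subst hy
      subst hy'
      rw [if_pos ⟨rfl, rfl⟩]
      rfl
    · rw [if_neg h1]
      symm
      rw [Matrix.vecMulVec_apply]
      by_cases hz1 : GHZN d N (α, (y, a)) = 0
      · rw [hz1, zero_mul]
      · have hy := hG α y a hz1
        have hz2 : GHZN d N (β, (y', b)) = 0 := by
          by_contra hz2
          exact h1 ⟨hy, hG β y' b hz2⟩
        rw [Pi.star_apply, hz2, star_zero, mul_zero]
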